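/- Let L be a finitely generated abelian group and let π : L → L ⊗_ℤ ℝ be the canonical map x ↦ x ⊗ 1. Let M be a finitely generated submonoid of L that generates L as a group. Then there exists an element m ∈ M such that every x ∈ L with π(x) ∈ π(m) + cone(π(M)) belongs to M; that is, π^{-1}(π(m) + cone(π(M))) ⊆ M. (Lemma 4.1 of the paper, a higher-dimensional analogue of the Frobenius coin problem.) -/

import Mathlib

open scoped TensorProduct
open scoped DirectSum

noncomputable section

/-- The convex cone generated by a subset `S` of a real vector space:
all finite sums `∑ λ_j • s_j` with `λ_j ∈ ℝ_{≥0}` and `s_j ∈ S`. -/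
def coneGen {V : Type*} [AddCommGroup V] [Module ℝ V] (S : Set V) : Set V :=
  {x | ∃ (k : ℕ) (lam : Fin k → ℝ) (s : Fin k → V),
    (∀ j, 0 ≤ lam j) ∧ (∀ j, s j ∈ S) ∧ x = ∑ j, lam j • s j}

private lemma aux_closure_range_nsmul {L : Type*} [AddCommMonoid L] {n : ℕ} (m : Fin n → L)
    {y : L} (hy : y ∈ AddSubmonoid.closure (Set.range m)) :
    ∃ a : Fin n → ℕ, y = ∑ i, a i • m i := by
  induction hy using AddSubmonoid.closure_induction with
  | mem z hz =>
    obtain ⟨i, rfl⟩ := hz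
    refine ⟨fun j => if j = i then 1 else 0, ?_⟩
    simp [ite_smul]
  | zero => exact ⟨0, by simp⟩
  | add a b ha hb iha ihb =>
    obtain ⟨u, rfl⟩ := iha; obtain ⟨v, rfl⟩ := ihb
    exact ⟨u + v, by simp [add_smul, Finset.sum_add_distrib]⟩

private lemma aux_exists_add_mem {L : Type*} [AddCommGroup L] (M : AddSubmonoid L)
    (hgen : AddSubgroup.closure (M : Set L) = ⊤) (y : L) :
    ∃ b, b ∈ M ∧ y + b ∈ M := by
  have hy : y ∈ AddSubgroup.closure (M : Set L) := by rw [hgen]; trivial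
  induction hy using AddSubgroup.closure_induction with
  | mem z hz => exact ⟨0, M.zero_mem, by simpa⟩
  | zero => exact ⟨0, M.zero_mem, by simpa using M.zero_mem⟩
  | add a b ha hb iha ihb =>
    obtain ⟨u, hu, hau⟩ := iha; obtain ⟨v, hv, hbv⟩ := ihb
    refine ⟨u + v, M.add_mem hu hv, ?_⟩
    have : a + b + (u + v) = (a + u) + (b + v) := by abel
    rw [this]; exact M.add_mem hau hbv
  | neg a ha iha =>
    obtain ⟨u, hu, hau⟩ := iha
    exact ⟨a + u, hau, by simpa⟩

/-- Lemma 4.1 of the paper, a higher-dimensional Frobenius coin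
problem: if `L` is a finitely generated abelian group, `π : L → L ⊗_ℤ ℝ` the
canonical map `x ↦ x ⊗ 1` (here realised, via the canonical isomorphism
`L ⊗_ℤ ℝ ≃ ℝ ⊗_ℤ L`, as `x ↦ 1 ⊗ x` so that the target carries its real vector
space structure), and `M` a finitely generated submonoid of `L` generating `L`
as a group, then there is `m ∈ M` with `π⁻¹(π(m) + cone(π(M))) ⊆ M`. -/
theorem frobenius_coin_lemma
    (L : Type*) [AddCommGroup L] [AddGroup.FG L]
    (M : AddSubmonoid L) (hfg : M.FG)
    (hgen : AddSubgroup.closure (M : Set L) = ⊤) :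
    ∃ m ∈ M, ∀ x : L,
      (∃ c ∈ coneGen ((fun y : L => (1 : ℝ) ⊗ₜ[ℤ] y) '' (M : Set L)),
        ((1 : ℝ) ⊗ₜ[ℤ] x : ℝ ⊗[ℤ] L) = (1 : ℝ) ⊗ₜ[ℤ] m + c) → x ∈ M := by
  classical
  -- generators of M
  obtain ⟨S, hS⟩ := hfg
  set n := S.card with hn
  set m : Fin n → L := fun i => ((S.equivFin.symm i : S) : L) with hmdef
  have hrange : Set.range m = (S : Set L) := by
    ext z; constructor
    · rintro ⟨i, rfl⟩; exact (S.equivFin.symm i).2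
    · intro hz; exact ⟨S.equivFin ⟨z, hz⟩, by simp [hmdef]⟩
  have hMc : AddSubmonoid.closure (Set.range m) = M := by rw [hrange, hS]
  have hmem : ∀ i, m i ∈ M := fun i => hMc ▸ AddSubmonoid.subset_closure ⟨i, rfl⟩
  -- structure theorem
  obtain ⟨r, ι, hι, p, hp, ex, ⟨e⟩⟩ := AddCommGroup.equiv_free_prod_directSum_zmod L
  haveI := hι
  haveI : ∀ i, NeZero ((p i) ^ (ex i)) := fun i => ⟨pow_ne_zero _ (hp i).ne_zero⟩
  haveI : ∀ i, Fintype (ZMod ((p i) ^ (ex i))) := fun i => ZMod.fintype _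
  haveI : Finite (⨁ i, ZMod ((p i) ^ (ex i))) :=
    Finite.of_injective (fun f => (f : ∀ i, ZMod ((p i) ^ (ex i)))) DFunLike.coe_injective
  -- the integer coordinate map and its real version
  set φ : L → (Fin r → ℤ) := fun y j => (e y).1 j with hφ
  set g : L →ₗ[ℤ] (Fin r → ℝ) :=
    { toFun := fun y j => ((e y).1 j : ℝ)
      map_add' := by intro y z; funext j; simp
      map_smul' := by intro z y; funext j; push_cast [map_zsmul]; simp } with hg
  have hgφ : ∀ y j, g y j = ((φ y j : ℤ) : ℝ) := fun y j => rfl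
  set Φ : ℝ ⊗[ℤ] L →ₗ[ℝ] (Fin r → ℝ) := LinearMap.liftBaseChange ℝ g with hΦ
  have hΦπ : ∀ y : L, Φ ((1:ℝ) ⊗ₜ[ℤ] y) = g y := by
    intro y; simp [hΦ, LinearMap.liftBaseChange_tmul]
  -- g of natural combinations of generators
  have hgcomb : ∀ a : Fin n → ℕ, g (∑ i, a i • m i) = ∑ i, ((a i : ℝ)) • g (m i) := by
    intro a
    rw [map_sum]
    refine Finset.sum_congr rfl fun i _ => ?_
    rw [map_nsmul, Nat.cast_smul_eq_nsmul]
  -- the bounded set F is finite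
  set F : Set L := {y : L | ∃ θ : Fin n → ℝ, (∀ i, 0 ≤ θ i ∧ θ i ≤ 1) ∧
      g y = ∑ i, θ i • g (m i)} with hFdef
  have hF : F.Finite := by
    set C : Fin r → ℤ := fun j => ∑ i, |φ (m i) j| with hC
    set h : L → (Fin r → ℤ) × (⨁ i, ZMod ((p i) ^ (ex i))) := fun y => (φ y, (e y).2) with hh
    have hinj : Function.Injective h := by
      intro y z hyz
      have h1 := congrArg Prod.fst hyz
      have h2 := congrArg Prod.snd hyz
      have h1' : (e y).1 = (e z).1 := DFunLike.coe_injective h1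
      exact e.injective (Prod.ext h1' h2)
    have hsub : F ⊆ h ⁻¹' ((↑(Fintype.piFinset fun j => Finset.Icc (-C j) (C j)) : Set (Fin r → ℤ)) ×ˢ Set.univ) := by
      rintro y ⟨θ, hθ, hy⟩
      refine ⟨?_, trivial⟩
      simp only [Finset.mem_coe, Fintype.mem_piFinset, Finset.mem_Icc]
      intro j
      have hyj : ((φ y j : ℤ) : ℝ) = ∑ i, θ i * ((φ (m i) j : ℤ) : ℝ) := by
        have := congrFun hy j
        simpa [hgφ, Finset.sum_apply] using this
      have hb : |((φ y j : ℤ) : ℝ)| ≤ ((C j : ℤ) : ℝ) := by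
        rw [hyj, hC]
        push_cast
        refine (Finset.abs_sum_le_sum_abs _ _).trans ?_
        refine Finset.sum_le_sum fun i _ => ?_
        rw [abs_mul]
        calc |θ i| * |((φ (m i) j : ℤ) : ℝ)| ≤ 1 * |((φ (m i) j : ℤ) : ℝ)| := by
              apply mul_le_mul_of_nonneg_right _ (abs_nonneg _)
              rw [abs_le]; exact ⟨by linarith [(hθ i).1], (hθ i).2⟩
          _ = |((φ (m i) j : ℤ) : ℝ)| := one_mul _
      have hb' : |φ y j| ≤ C j := by
        rw [← Int.cast_abs] at hb
        exact_mod_cast hb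
      exact abs_le.mp hb'
    refine Set.Finite.subset (Set.Finite.preimage hinj.injOn ?_) hsub
    exact Set.Finite.prod (Finset.finite_toSet _) Set.finite_univ
  -- choose correctors
  have hw : ∀ y : L, ∃ b, b ∈ M ∧ y + b ∈ M := aux_exists_add_mem M hgen
  set w : L → L := fun y => (hw y).choose with hwdef
  have hwmem : ∀ y, w y ∈ M := fun y => (hw y).choose_spec.1
  have hwadd : ∀ y, y + w y ∈ M := fun y => (hw y).choose_spec.2
  set m₀ : L := ∑ y ∈ hF.toFinset, w y with hm₀
  refine ⟨m₀, AddSubmonoid.sum_mem M fun y _ => hwmem y, ?_⟩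
  rintro x ⟨c, ⟨k, lam, s, hlam, hs, rfl⟩, hx⟩
  -- write each s j as 1 ⊗ y j with y j ∈ M, and decompose y j over the generators
  choose y hyM hsy using hs
  have hyc : ∀ j, y j ∈ AddSubmonoid.closure (Set.range m) := fun j => hMc ▸ hyM j
  choose a ha using fun j => aux_closure_range_nsmul m (hyc j)
  -- apply Φ to the hypothesis
  have key : g x = g m₀ + ∑ i, (∑ j, lam j * (a j i : ℝ)) • g (m i) := by
    have := congrArg Φ hx
    rw [hΦπ, map_add, hΦπ, map_sum Φ (fun j => lam j • s j) Finset.univ] at this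
    rw [this]
    congr 1
    have hterm : ∀ j : Fin k, Φ (lam j • s j) = ∑ i, (lam j * (a j i : ℝ)) • g (m i) := by
      intro j
      rw [map_smul, ← hsy j, hΦπ, ha j, hgcomb, Finset.smul_sum]
      exact Finset.sum_congr rfl fun i _ => by rw [smul_smul]
    calc ∑ j, Φ (lam j • s j)
        = ∑ j, ∑ i, (lam j * (a j i : ℝ)) • g (m i) :=
          Finset.sum_congr rfl fun j _ => hterm j
      _ = ∑ i, ∑ j, (lam j * (a j i : ℝ)) • g (m i) := Finset.sum_comm
      _ = ∑ i, (∑ j, lam j * (a j i : ℝ)) • g (m i) :=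
          Finset.sum_congr rfl fun i _ => (Finset.sum_smul).symm
  set μ : Fin n → ℝ := fun i => ∑ j, lam j * (a j i : ℝ) with hμdef
  have hμ : ∀ i, 0 ≤ μ i := fun i =>
    Finset.sum_nonneg fun j _ => mul_nonneg (hlam j) (by positivity)
  set K : Fin n → ℕ := fun i => ⌊μ i⌋₊ with hK
  set θ : Fin n → ℝ := fun i => μ i - K i with hθdef
  have hθ : ∀ i, 0 ≤ θ i ∧ θ i ≤ 1 := by
    intro i
    constructor
    · simp only [hθdef, sub_nonneg]; exact Nat.floor_le (hμ i)
    · have := Nat.lt_floor_add_one (μ i)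
      simp only [hθdef]; push_cast at this ⊢; linarith
  set y₀ : L := x - m₀ - ∑ i, K i • m i with hy₀
  have hy₀F : y₀ ∈ F := by
    refine ⟨θ, hθ, ?_⟩
    rw [hy₀, map_sub, map_sub, hgcomb, key]
    rw [Finset.sum_congr rfl fun i (_ : i ∈ Finset.univ) =>
      (by rw [hθdef, sub_smul] : θ i • g (m i) = μ i • g (m i) - (K i : ℝ) • g (m i)),
      Finset.sum_sub_distrib]
    abel
  have hy₀Fs : y₀ ∈ hF.toFinset := hF.mem_toFinset.mpr hy₀F
  have hrest : m₀ - w y₀ ∈ M := by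
    have hsum : m₀ - w y₀ = ∑ z ∈ hF.toFinset.erase y₀, w z := by
      rw [hm₀, ← Finset.add_sum_erase hF.toFinset w hy₀Fs]
      abel
    rw [hsum]
    exact AddSubmonoid.sum_mem M fun z _ => hwmem z
  have hxeq : x = (y₀ + w y₀) + (m₀ - w y₀) + ∑ i, K i • m i := by
    rw [hy₀]; abel
  rw [hxeq]
  refine M.add_mem (M.add_mem (hwadd y₀) hrest) ?_
  exact AddSubmonoid.sum_mem M fun i _ => AddSubmonoid.nsmul_mem M (hmem i) _
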